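/- arXiv:2211.14525 — 3 statements merged into one kernel-verified Lean document; each statement's English description precedes it below -/
import Mathlib

section
/- Let X be a Hilbert space and f₀, f₁ : X → (-∞,+∞] be proper lower semicontinuous functions that are ρ₀- and ρ₁-weakly convex respectively (ρ₀, ρ₁ ≥ 0). Assume dom f₀ ∩ dom f₁ contains a point at which f₀ + (ρ₀/2)‖·‖² or f₁ + (ρ₁/2)‖·‖² is continuous. Then for any s ∈ dom (f₀+f₁)*_{ρ₀+ρ₁}, there exist p₀, p₁ ∈ X with s = p₀ + p₁ and (f₀+f₁)*_{ρ₀+ρ₁}(s) = (f₀)*_{ρ₀}(p₀) + (f₁)*_{ρ₁}(p₁). -/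
open scoped InnerProductSpace
open Set

noncomputable section

/-- A function into `(-∞,+∞]` is proper: never `⊥` and finite somewhere. -/
def EProper {X : Type*} (f : X → EReal) : Prop :=
  (∀ x, f x ≠ ⊥) ∧ ∃ x, f x ≠ ⊤

/-- Effective domain of an extended-real-valued function. -/
def edom {X : Type*} (f : X → EReal) : Set X := {x | f x ≠ ⊤}

/-- Convexity for extended-real-valued functions. -/
def EConvexOn {X : Type*} [AddCommGroup X] [Module ℝ X] (g : X → EReal) : Prop :=
  ∀ x y : X, ∀ l : ℝ, 0 ≤ l → l ≤ 1 →
    g (l • x + (1 - l) • y) ≤ (l : EReal) * g x + ((1 - l : ℝ) : EReal) * g y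

/-- `f` is `ρ`-weakly convex if `f + (ρ/2)‖·‖²` is convex. -/
def WeaklyConvex {X : Type*} [NormedAddCommGroup X] [InnerProductSpace ℝ X]
    (ρ : ℝ) (f : X → EReal) : Prop :=
  EConvexOn (fun x => f x + ((ρ / 2 * ‖x‖ ^ 2 : ℝ) : EReal))

/-- Global proximal ε-subdifferential `∂ᵋ_{(2,C)} f (x₀)`. -/
def proxSubdiff {X : Type*} [NormedAddCommGroup X] [InnerProductSpace ℝ X]
    (C ε : ℝ) (f : X → EReal) (x₀ : X) : Set X :=
  {v | ∀ x : X, f x₀ + ((⟪v, x - x₀⟫_ℝ - C * ‖x - x₀‖ ^ 2 - ε : ℝ) : EReal) ≤ f x}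

/-- The `ρ`-conjugate `(f)*_ρ(u) = sup_y { -(ρ/2)‖y‖² + ⟨u,y⟩ - f(y) }`. -/
def rhoConj {X : Type*} [NormedAddCommGroup X] [InnerProductSpace ℝ X]
    (ρ : ℝ) (f : X → EReal) (u : X) : EReal :=
  ⨆ y : X, (((-(ρ / 2) * ‖y‖ ^ 2 + ⟪u, y⟫_ℝ : ℝ) : EReal) - f y)

/-- `xε` is an ε-proximal point of `g` at `y`. -/
def IsEpsProx {X : Type*} [NormedAddCommGroup X] [InnerProductSpace ℝ X]
    (g : X → EReal) (ε : ℝ) (y xε : X) : Prop :=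
  ∀ x : X, g xε + ((1 / 2 * ‖xε - y‖ ^ 2 : ℝ) : EReal) ≤
    g x + ((1 / 2 * ‖x - y‖ ^ 2 : ℝ) : EReal) + (ε : EReal)

variable {X : Type*} [NormedAddCommGroup X] [InnerProductSpace ℝ X] [CompleteSpace X]

/-- The plain Fenchel conjugate. -/
def fconj (F : X → EReal) (p : X) : EReal :=
  ⨆ y : X, (((⟪p, y⟫_ℝ : ℝ) : EReal) - F y)

theorem rhoConj_eq_fconj (ρ : ℝ) (f : X → EReal) (p : X) :
    rhoConj ρ f p = fconj (fun x => f x + ((ρ / 2 * ‖x‖ ^ 2 : ℝ) : EReal)) p := by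
  unfold rhoConj fconj
  congr 1; ext y
  dsimp only
  by_cases hb : f y = ⊥
  · rw [hb, EReal.bot_add, EReal.coe_sub_bot, EReal.coe_sub_bot]
  by_cases ht : f y = ⊤
  · rw [ht, EReal.top_add_coe, EReal.sub_top, EReal.sub_top]
  rw [← EReal.coe_toReal ht hb, ← EReal.coe_add, ← EReal.coe_sub, ← EReal.coe_sub,
    EReal.coe_eq_coe_iff]
  ring

/-- The key separation lemma: exact Fenchel–Rockafellar attainment. -/
theorem fconj_key (F₀ F₁ : X → EReal) (hb₀ : ∀ x, F₀ x ≠ ⊥) (hb₁ : ∀ x, F₁ x ≠ ⊥)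
    (hc₀ : EConvexOn F₀) (hc₁ : EConvexOn F₁) (xb : X)
    (hx0 : F₀ xb ≠ ⊤) (hx1 : F₁ xb ≠ ⊤)
    (hcont : ContinuousAt F₀ xb) (s : X) (α : ℝ)
    (hα : ∀ y : X, ((⟪s, y⟫_ℝ : ℝ) : EReal) - (F₀ y + F₁ y) ≤ (α : EReal)) :
    ∃ p₀ p₁ : X, s = p₀ + p₁ ∧ fconj F₀ p₀ + fconj F₁ p₁ ≤ (α : EReal) := by
  obtain ⟨a, ha⟩ : ∃ a : ℝ, F₀ xb = (a : EReal) := ⟨(F₀ xb).toReal, (EReal.coe_toReal hx0 (hb₀ xb)).symm⟩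
  obtain ⟨b, hbb⟩ : ∃ b : ℝ, F₁ xb = (b : EReal) := ⟨(F₁ xb).toReal, (EReal.coe_toReal hx1 (hb₁ xb)).symm⟩
  -- the strict epigraph of F₀ - ⟨s,·⟩ and hypograph of -α - F₁
  set C : Set (X × ℝ) := {q | F₀ q.1 < ((q.2 + ⟪s, q.1⟫_ℝ : ℝ) : EReal)} with hC
  set D : Set (X × ℝ) := {q | F₁ q.1 ≤ ((-α - q.2 : ℝ) : EReal)} with hD
  -- convexity of C
  have hCconv : Convex ℝ C := by
    rintro q hq q' hq' l m hl hm hlm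
    have hm' : m = 1 - l := by linarith
    subst hm'
    have hq2 : F₀ q.1 < ((q.2 + ⟪s, q.1⟫_ℝ : ℝ) : EReal) := hq
    have hq2' : F₀ q'.1 < ((q'.2 + ⟪s, q'.1⟫_ℝ : ℝ) : EReal) := hq'
    obtain ⟨b₀, hb0⟩ : ∃ r : ℝ, F₀ q.1 = (r : EReal) :=
      ⟨(F₀ q.1).toReal, (EReal.coe_toReal (fun h => by rw [h] at hq2; exact (not_top_lt hq2)) (hb₀ q.1)).symm⟩
    obtain ⟨b₀', hb0'⟩ : ∃ r : ℝ, F₀ q'.1 = (r : EReal) :=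
      ⟨(F₀ q'.1).toReal, (EReal.coe_toReal (fun h => by rw [h] at hq2'; exact (not_top_lt hq2')) (hb₀ q'.1)).symm⟩
    have h1 : F₀ (l • q.1 + (1 - l) • q'.1) ≤ ((l * b₀ + (1 - l) * b₀' : ℝ) : EReal) := by
      have := hc₀ q.1 q'.1 l hl (by linarith)
      rw [hb0, hb0'] at this
      rw [EReal.coe_add, EReal.coe_mul, EReal.coe_mul]
      exact this
    rw [hb0, EReal.coe_lt_coe_iff] at hq2
    rw [hb0', EReal.coe_lt_coe_iff] at hq2'
    have hq1 := hq2
    have hq1' := hq2'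
    have hfst : (l • q + (1 - l) • q').1 = l • q.1 + (1 - l) • q'.1 := rfl
    have hsnd : (l • q + (1 - l) • q').2 = l * q.2 + (1 - l) * q'.2 := rfl
    rw [hC, Set.mem_setOf_eq, hfst, hsnd]
    refine lt_of_le_of_lt h1 (EReal.coe_lt_coe_iff.2 ?_)
    have hinner : ⟪s, l • q.1 + (1 - l) • q'.1⟫_ℝ = l * ⟪s, q.1⟫_ℝ + (1 - l) * ⟪s, q'.1⟫_ℝ := by
      rw [inner_add_right, real_inner_smul_right, real_inner_smul_right]
    rw [hinner]
    rcases eq_or_lt_of_le hl with h0 | hpos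
    · rw [← h0]; simpa using hq1'
    · nlinarith [mul_lt_mul_of_pos_left hq1 hpos, mul_le_mul_of_nonneg_left hq1'.le hm]
  -- convexity of D
  have hDconv : Convex ℝ D := by
    rintro q hq q' hq' l m hl hm hlm
    have hm' : m = 1 - l := by linarith
    subst hm'
    have hq1 := hq; rw [hD, Set.mem_setOf_eq] at hq1
    have hq1' := hq'; rw [hD, Set.mem_setOf_eq] at hq1'
    have h1 : F₁ (l • q.1 + (1 - l) • q'.1) ≤
        (l : EReal) * F₁ q.1 + ((1 - l : ℝ) : EReal) * F₁ q'.1 := hc₁ q.1 q'.1 l hl (by linarith)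
    obtain ⟨b₁, hb1⟩ : ∃ r : ℝ, F₁ q.1 = (r : EReal) :=
      ⟨(F₁ q.1).toReal, (EReal.coe_toReal (fun h => by rw [h, top_le_iff] at hq1; exact EReal.coe_ne_top _ hq1) (hb₁ q.1)).symm⟩
    obtain ⟨b₁', hb1'⟩ : ∃ r : ℝ, F₁ q'.1 = (r : EReal) :=
      ⟨(F₁ q'.1).toReal, (EReal.coe_toReal (fun h => by rw [h, top_le_iff] at hq1'; exact EReal.coe_ne_top _ hq1') (hb₁ q'.1)).symm⟩
    rw [hb1] at hq1; rw [hb1'] at hq1'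
    rw [EReal.coe_le_coe_iff] at hq1 hq1'
    rw [hD, Set.mem_setOf_eq]
    have hfst : (l • q + (1 - l) • q').1 = l • q.1 + (1 - l) • q'.1 := rfl
    have hsnd : (l • q + (1 - l) • q').2 = l * q.2 + (1 - l) * q'.2 := rfl
    rw [hfst, hsnd]
    refine le_trans h1 ?_
    rw [hb1, hb1', ← EReal.coe_mul, ← EReal.coe_mul, ← EReal.coe_add, EReal.coe_le_coe_iff]
    nlinarith [mul_le_mul_of_nonneg_left hq1 hl, mul_le_mul_of_nonneg_left hq1' hm]
  -- disjointness
  have hdisj : Disjoint C D := by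
    rw [Set.disjoint_left]
    rintro q hq hqD
    rw [hC, Set.mem_setOf_eq] at hq
    rw [hD, Set.mem_setOf_eq] at hqD
    obtain ⟨b₀, hb0⟩ : ∃ r : ℝ, F₀ q.1 = (r : EReal) :=
      ⟨(F₀ q.1).toReal, (EReal.coe_toReal (fun h => by rw [h] at hq; exact (not_top_lt hq)) (hb₀ q.1)).symm⟩
    obtain ⟨b₁, hb1⟩ : ∃ r : ℝ, F₁ q.1 = (r : EReal) :=
      ⟨(F₁ q.1).toReal, (EReal.coe_toReal (fun h => by rw [h, top_le_iff] at hqD; exact EReal.coe_ne_top _ hqD) (hb₁ q.1)).symm⟩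
    rw [hb0, EReal.coe_lt_coe_iff] at hq
    rw [hb1, EReal.coe_le_coe_iff] at hqD
    have := hα q.1
    rw [hb0, hb1, ← EReal.coe_add, ← EReal.coe_sub, EReal.coe_le_coe_iff] at this
    linarith
  -- nonempty interior of C via continuity
  have hcball : ∃ δ > 0, ∀ x, dist x xb < δ →
      F₀ x < ((a + 1 : ℝ) : EReal) ∧ ⟪s, xb⟫_ℝ - 1 < ⟪s, x⟫_ℝ := by
    have h1 : ∀ᶠ x in nhds xb, F₀ x < ((a + 1 : ℝ) : EReal) := by
      refine hcont.eventually_lt continuousAt_const ?_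
      rw [ha]; exact_mod_cast lt_add_one a
    have h2 : ∀ᶠ x in nhds xb, ⟪s, xb⟫_ℝ - 1 < ⟪s, x⟫_ℝ := by
      refine ContinuousAt.eventually_lt continuousAt_const ?_ (by linarith)
      exact ((continuous_const.inner continuous_id).continuousAt)
    obtain ⟨δ, hδ, hball⟩ := Metric.eventually_nhds_iff.1 (h1.and h2)
    exact ⟨δ, hδ, fun x hx => hball hx⟩
  obtain ⟨δ, hδ, hball⟩ := hcball
  set M : ℝ := a + 2 - ⟪s, xb⟫_ℝ with hM
  set U : Set (X × ℝ) := Metric.ball xb δ ×ˢ Set.Ioi M with hU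
  have hUopen : IsOpen U := Metric.isOpen_ball.prod isOpen_Ioi
  have hUsub : U ⊆ C := by
    rintro ⟨x, t⟩ ⟨hx, ht⟩
    obtain ⟨hF, hin⟩ := hball x (by simpa [Metric.mem_ball] using hx)
    rw [hC, Set.mem_setOf_eq]
    refine lt_of_lt_of_le hF (EReal.coe_le_coe_iff.2 ?_)
    have : (M : ℝ) < t := ht
    simp only [hM] at this
    linarith
  have hUint : U ⊆ interior C := interior_maximal hUsub hUopen
  have hq0 : ((xb, M + 1) : X × ℝ) ∈ U := by
    constructor
    · simpa [Metric.mem_ball] using hδ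
    · exact lt_add_one M
  have hq0int : ((xb, M + 1) : X × ℝ) ∈ interior C := hUint hq0
  -- separation
  obtain ⟨f, u, hfu, hfD⟩ := geometric_hahn_banach_open (hCconv.interior) isOpen_interior
    hDconv (hdisj.mono_left interior_subset)
  -- f ≤ u on all of C
  have hCle : ∀ q ∈ C, f q ≤ u := by
    intro q hq
    have hconts : Continuous fun l : ℝ => f (l • ((xb, M + 1) : X × ℝ) + (1 - l) • q) := by
      apply f.continuous.comp
      exact (continuous_id.smul continuous_const).add
        ((continuous_const.sub continuous_id).smul continuous_const)
    have hlim : Filter.Tendsto (fun l : ℝ => f (l • ((xb, M + 1) : X × ℝ) + (1 - l) • q))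
        (nhdsWithin 0 (Set.Ioi 0)) (nhds (f q)) := by
      have := (hconts.tendsto (x := (0:ℝ))).mono_left
        (nhdsWithin_le_nhds (s := Set.Ioi (0:ℝ)))
      simpa using this
    refine le_of_tendsto hlim ?_
    filter_upwards [Ioo_mem_nhdsGT_of_mem (Set.left_mem_Ico.2 one_pos)] with l hl
    have hmem : l • ((xb, M + 1) : X × ℝ) + (1 - l) • q ∈ interior C :=
      hCconv.combo_interior_self_mem_interior hq0int hq hl.1 (by linarith [hl.2]) (by ring)
    exact (hfu _ hmem).le
  -- decompose f
  set c : ℝ := f ((0 : X), (1 : ℝ)) with hc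
  have hsplit : ∀ (x : X) (t : ℝ), f (x, t) = f (x, 0) + t * c := by
    intro x t
    have : ((x, t) : X × ℝ) = (x, 0) + t • ((0 : X), (1 : ℝ)) := by
      simp [Prod.ext_iff]
    rw [this, map_add, map_smul, smul_eq_mul]
  -- c < 0
  have hcneg : c < 0 := by
    rcases lt_or_ge c 0 with h | h
    · exact h
    rcases eq_or_lt_of_le h with heq | hpos
    · -- c = 0 : contradiction via xb
      exfalso
      have h1 : f (xb, M + 1) < u := hfu _ hq0int
      have h2 : u ≤ f (xb, -α - b) := by
        apply hfD
        rw [hD, Set.mem_setOf_eq, hbb]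
        refine EReal.coe_le_coe_iff.2 ?_
        show b ≤ -α - (-α - b)
        linarith
      rw [hsplit xb (M + 1), ← heq] at h1
      rw [hsplit xb (-α - b), ← heq] at h2
      simp at h1 h2
      linarith
    · -- c > 0 : contradiction via large t
      exfalso
      set t : ℝ := max (M + 1) ((u - f (xb, 0)) / c + 1) with hT
      have htM : M < t := lt_of_lt_of_le (lt_add_one M) (le_max_left _ _)
      have hmem : ((xb, t) : X × ℝ) ∈ U := ⟨by simpa [Metric.mem_ball] using hδ, htM⟩
      have h1 : f (xb, t) < u := hfu _ (hUint hmem)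
      rw [hsplit xb t] at h1
      have ht2 : (u - f (xb, 0)) / c + 1 ≤ t := le_max_right _ _
      have := mul_le_mul_of_nonneg_right ht2 (le_of_lt hpos)
      rw [add_mul, div_mul_cancel₀ _ (ne_of_gt hpos), one_mul] at this
      linarith
  -- Riesz representation of x ↦ f (x, 0)
  set w : X →L[ℝ] ℝ := f.comp (ContinuousLinearMap.inl ℝ X ℝ) with hw
  have hwx : ∀ x : X, w x = f (x, 0) := fun x => rfl
  set v : X := (InnerProductSpace.toDual ℝ X).symm w with hv
  have hvy : ∀ y : X, ⟪v, y⟫_ℝ = w y := fun y => InnerProductSpace.toDual_symm_apply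
  refine ⟨s + (-(1 / c)) • v, -((-(1 / c)) • v), by abel, ?_⟩
  -- bound the two conjugates
  have hbound0 : fconj F₀ (s + (-(1 / c)) • v) ≤ ((-(u / c) : ℝ) : EReal) := by
    refine iSup_le fun y => ?_
    by_cases ht : F₀ y = ⊤
    · rw [ht, EReal.sub_top]; exact bot_le
    obtain ⟨b₀, hb0⟩ : ∃ r : ℝ, F₀ y = (r : EReal) :=
      ⟨(F₀ y).toReal, (EReal.coe_toReal ht (hb₀ y)).symm⟩
    rw [hb0, ← EReal.coe_sub, EReal.coe_le_coe_iff]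
    -- first: w y + c * (b₀ - ⟪s,y⟫) ≤ u
    have hA : w y + c * (b₀ - ⟪s, y⟫_ℝ) ≤ u := by
      have hAe : ∀ ε : ℝ, 0 < ε → w y + c * (b₀ - ⟪s, y⟫_ℝ + ε) ≤ u := by
        intro ε hε
        have hmem : ((y, b₀ - ⟪s, y⟫_ℝ + ε) : X × ℝ) ∈ C := by
          rw [hC, Set.mem_setOf_eq, hb0]
          refine EReal.coe_lt_coe_iff.2 ?_
          show b₀ < b₀ - ⟪s, y⟫_ℝ + ε + ⟪s, y⟫_ℝ
          linarith
        have := hCle _ hmem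
        rw [hsplit y (b₀ - ⟪s, y⟫_ℝ + ε), ← hwx] at this
        linarith [this]
      by_contra hcon
      push_neg at hcon
      have hε : (0 : ℝ) < (w y + c * (b₀ - ⟪s, y⟫_ℝ) - u) / (-2 * c) := by
        apply div_pos (by linarith) (by linarith)
      have := hAe _ hε
      have hcne : c ≠ 0 := ne_of_lt hcneg
      rw [mul_add] at this
      rw [mul_div_assoc'] at this
      have hrw : c * (w y + c * (b₀ - ⟪s, y⟫_ℝ) - u) / (-2 * c)
          = -(w y + c * (b₀ - ⟪s, y⟫_ℝ) - u) / 2 := by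
        field_simp
      rw [hrw] at this
      linarith
    -- now divide by -c
    rw [← mul_le_mul_iff_of_pos_right (show (0 : ℝ) < -c by linarith)]
    have hvy' : ⟪s + (-(1 / c)) • v, y⟫_ℝ = ⟪s, y⟫_ℝ + (-(1 / c)) * w y := by
      rw [inner_add_left, real_inner_smul_left, hvy]
    rw [hvy']
    have hcne : c ≠ 0 := ne_of_lt hcneg
    have e1 : (⟪s, y⟫_ℝ + -(1 / c) * w y - b₀) * -c = w y + c * (b₀ - ⟪s, y⟫_ℝ) := by
      field_simp; ring
    have e2 : -(u / c) * -c = u := by field_simp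
    rw [e1, e2]; exact hA
  have hbound1 : fconj F₁ (-((-(1 / c)) • v)) ≤ ((α + u / c : ℝ) : EReal) := by
    refine iSup_le fun y => ?_
    by_cases ht : F₁ y = ⊤
    · rw [ht, EReal.sub_top]; exact bot_le
    obtain ⟨b₁, hb1⟩ : ∃ r : ℝ, F₁ y = (r : EReal) :=
      ⟨(F₁ y).toReal, (EReal.coe_toReal ht (hb₁ y)).symm⟩
    rw [hb1, ← EReal.coe_sub, EReal.coe_le_coe_iff]
    have hmem : ((y, -α - b₁) : X × ℝ) ∈ D := by
      rw [hD, Set.mem_setOf_eq, hb1]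
      refine EReal.coe_le_coe_iff.2 ?_
      show b₁ ≤ -α - (-α - b₁)
      linarith
    have hB := hfD _ hmem
    rw [hsplit y (-α - b₁), ← hwx] at hB
    have hvy' : ⟪-((-(1 / c)) • v), y⟫_ℝ = (1 / c) * w y := by
      rw [inner_neg_left, real_inner_smul_left, hvy]; ring
    rw [hvy']
    rw [← mul_le_mul_iff_of_pos_right (show (0 : ℝ) < -c by linarith)]
    have hcne : c ≠ 0 := ne_of_lt hcneg
    have e1 : (1 / c * w y - b₁) * -c = -(w y) + c * b₁ := by field_simp; ring
    have e2 : (α + u / c) * -c = -(c * α) - u := by field_simp; ring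
    rw [e1, e2]; linarith [hB]
  calc fconj F₀ (s + (-(1 / c)) • v) + fconj F₁ (-((-(1 / c)) • v))
      ≤ ((-(u / c) : ℝ) : EReal) + ((α + u / c : ℝ) : EReal) :=
        add_le_add hbound0 hbound1
    _ = (α : EReal) := by rw [← EReal.coe_add]; norm_cast; ring

theorem point_eq (f₀ f₁ : X → EReal) (hb0 : ∀ x, f₀ x ≠ ⊥) (hb1 : ∀ x, f₁ x ≠ ⊥)
    (ρ₀ ρ₁ : ℝ) (s y : X) :
    ((-((ρ₀ + ρ₁) / 2) * ‖y‖ ^ 2 + ⟪s, y⟫_ℝ : ℝ) : EReal) - (f₀ y + f₁ y)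
      = ((⟪s, y⟫_ℝ : ℝ) : EReal) -
        ((f₀ y + ((ρ₀ / 2 * ‖y‖ ^ 2 : ℝ) : EReal)) + (f₁ y + ((ρ₁ / 2 * ‖y‖ ^ 2 : ℝ) : EReal))) := by
  by_cases h0 : f₀ y = ⊤
  · rw [h0, EReal.top_add_of_ne_bot (hb1 y), EReal.sub_top, EReal.top_add_coe,
      EReal.top_add_of_ne_bot (fun h => (hb1 y) ((EReal.add_eq_bot_iff.1 h).resolve_right
        (EReal.coe_ne_bot _))), EReal.sub_top]
  by_cases h1 : f₁ y = ⊤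
  · rw [h1, EReal.add_top_of_ne_bot (hb0 y), EReal.sub_top, EReal.top_add_coe,
      EReal.add_top_of_ne_bot (fun h => (hb0 y) ((EReal.add_eq_bot_iff.1 h).resolve_right
        (EReal.coe_ne_bot _))), EReal.sub_top]
  rw [← EReal.coe_toReal h0 (hb0 y), ← EReal.coe_toReal h1 (hb1 y),
    ← EReal.coe_add, ← EReal.coe_add, ← EReal.coe_add, ← EReal.coe_add,
    ← EReal.coe_sub, ← EReal.coe_sub, EReal.coe_eq_coe_iff]
  ring

theorem rhoConj_sum (f₀ f₁ : X → EReal) (ρ₀ ρ₁ : ℝ) (hρ₀ : 0 ≤ ρ₀) (hρ₁ : 0 ≤ ρ₁)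
    (hp₀ : EProper f₀) (hp₁ : EProper f₁)
    (hl₀ : LowerSemicontinuous f₀) (hl₁ : LowerSemicontinuous f₁)
    (hw₀ : WeaklyConvex ρ₀ f₀) (hw₁ : WeaklyConvex ρ₁ f₁)
    (hcont : ∃ x ∈ edom f₀ ∩ edom f₁,
      ContinuousAt (fun z => f₀ z + ((ρ₀ / 2 * ‖z‖ ^ 2 : ℝ) : EReal)) x ∨
      ContinuousAt (fun z => f₁ z + ((ρ₁ / 2 * ‖z‖ ^ 2 : ℝ) : EReal)) x)
    (s : X) (hs : rhoConj (ρ₀ + ρ₁) (fun x => f₀ x + f₁ x) s ≠ ⊤) :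
    ∃ p₀ p₁ : X, s = p₀ + p₁ ∧
      rhoConj (ρ₀ + ρ₁) (fun x => f₀ x + f₁ x) s =
        rhoConj ρ₀ f₀ p₀ + rhoConj ρ₁ f₁ p₁ := by
  obtain ⟨hbot₀, -⟩ := hp₀
  obtain ⟨hbot₁, -⟩ := hp₁
  obtain ⟨xb, ⟨hxd0, hxd1⟩, hcc⟩ := hcont
  have hxd0' : f₀ xb ≠ ⊤ := hxd0
  have hxd1' : f₁ xb ≠ ⊤ := hxd1
  set F₀ : X → EReal := fun z => f₀ z + ((ρ₀ / 2 * ‖z‖ ^ 2 : ℝ) : EReal) with hF₀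
  set F₁ : X → EReal := fun z => f₁ z + ((ρ₁ / 2 * ‖z‖ ^ 2 : ℝ) : EReal) with hF₁
  have hbF₀ : ∀ x, F₀ x ≠ ⊥ := fun x h =>
    (hbot₀ x) ((EReal.add_eq_bot_iff.1 h).resolve_right (EReal.coe_ne_bot _))
  have hbF₁ : ∀ x, F₁ x ≠ ⊥ := fun x h =>
    (hbot₁ x) ((EReal.add_eq_bot_iff.1 h).resolve_right (EReal.coe_ne_bot _))
  have htF₀ : F₀ xb ≠ ⊤ := by
    show f₀ xb + _ ≠ ⊤
    rw [← EReal.coe_toReal hxd0' (hbot₀ xb), ← EReal.coe_add]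
    exact EReal.coe_ne_top _
  have htF₁ : F₁ xb ≠ ⊤ := by
    show f₁ xb + _ ≠ ⊤
    rw [← EReal.coe_toReal hxd1' (hbot₁ xb), ← EReal.coe_add]
    exact EReal.coe_ne_top _
  -- rewrite the conjugate of the sum
  have hkey : rhoConj (ρ₀ + ρ₁) (fun x => f₀ x + f₁ x) s
      = ⨆ y : X, (((⟪s, y⟫_ℝ : ℝ) : EReal) - (F₀ y + F₁ y)) := by
    unfold rhoConj
    exact iSup_congr fun y => point_eq f₀ f₁ hbot₀ hbot₁ ρ₀ ρ₁ s y
  have hAbot : rhoConj (ρ₀ + ρ₁) (fun x => f₀ x + f₁ x) s ≠ ⊥ := by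
    intro h
    have hle : ((⟪s, xb⟫_ℝ : ℝ) : EReal) - (F₀ xb + F₁ xb)
        ≤ rhoConj (ρ₀ + ρ₁) (fun x => f₀ x + f₁ x) s := by
      rw [hkey]
      exact le_iSup (fun y => ((⟪s, y⟫_ℝ : ℝ) : EReal) - (F₀ y + F₁ y)) xb
    rw [h, le_bot_iff] at hle
    have hne : ((⟪s, xb⟫_ℝ : ℝ) : EReal) - (F₀ xb + F₁ xb) ≠ ⊥ := by
      rw [← EReal.coe_toReal htF₀ (hbF₀ xb), ← EReal.coe_toReal htF₁ (hbF₁ xb),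
        ← EReal.coe_add, ← EReal.coe_sub]
      exact EReal.coe_ne_bot _
    exact hne hle
  obtain ⟨α, hα⟩ : ∃ α : ℝ, rhoConj (ρ₀ + ρ₁) (fun x => f₀ x + f₁ x) s = (α : EReal) :=
    ⟨_, (EReal.coe_toReal hs hAbot).symm⟩
  have hαle : ∀ y : X, ((⟪s, y⟫_ℝ : ℝ) : EReal) - (F₀ y + F₁ y) ≤ (α : EReal) := by
    intro y
    rw [← hα, hkey]
    exact le_iSup (fun y => ((⟪s, y⟫_ℝ : ℝ) : EReal) - (F₀ y + F₁ y)) y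
  -- apply the key lemma, in the right order
  obtain ⟨p₀, p₁, hsum, hle⟩ :
      ∃ p₀ p₁ : X, s = p₀ + p₁ ∧ fconj F₀ p₀ + fconj F₁ p₁ ≤ (α : EReal) := by
    rcases hcc with h0 | h1
    · exact fconj_key F₀ F₁ hbF₀ hbF₁ hw₀ hw₁ xb htF₀ htF₁ h0 s α hαle
    · obtain ⟨q₀, q₁, hsum, hle⟩ := fconj_key F₁ F₀ hbF₁ hbF₀ hw₁ hw₀ xb htF₁ htF₀ h1 s α
        (fun y => by rw [add_comm (F₁ y)]; exact hαle y)
      exact ⟨q₁, q₀, by rw [hsum, add_comm], by rw [add_comm]; exact hle⟩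
  -- reverse inequality
  have hge : (α : EReal) ≤ fconj F₀ p₀ + fconj F₁ p₁ := by
    rw [← hα, hkey]
    refine iSup_le fun y => ?_
    by_cases h0 : F₀ y = ⊤
    · rw [h0, EReal.top_add_of_ne_bot (hbF₁ y), EReal.sub_top]; exact bot_le
    by_cases h1 : F₁ y = ⊤
    · rw [h1, EReal.add_top_of_ne_bot (hbF₀ y), EReal.sub_top]; exact bot_le
    obtain ⟨b₀, hb0⟩ : ∃ r : ℝ, F₀ y = (r : EReal) := ⟨_, (EReal.coe_toReal h0 (hbF₀ y)).symm⟩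
    obtain ⟨b₁, hb1⟩ : ∃ r : ℝ, F₁ y = (r : EReal) := ⟨_, (EReal.coe_toReal h1 (hbF₁ y)).symm⟩
    have hinner : ⟪s, y⟫_ℝ = ⟪p₀, y⟫_ℝ + ⟪p₁, y⟫_ℝ := by
      rw [hsum, inner_add_left]
    have h0' := le_iSup (fun z => ((⟪p₀, z⟫_ℝ : ℝ) : EReal) - F₀ z) y
    have h1' := le_iSup (fun z => ((⟪p₁, z⟫_ℝ : ℝ) : EReal) - F₁ z) y
    simp only [hb0, hb1] at h0' h1'
    rw [← EReal.coe_sub] at h0' h1'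
    calc ((⟪s, y⟫_ℝ : ℝ) : EReal) - (F₀ y + F₁ y)
        = ((⟪p₀, y⟫_ℝ - b₀ : ℝ) : EReal) + ((⟪p₁, y⟫_ℝ - b₁ : ℝ) : EReal) := by
          rw [hb0, hb1, ← EReal.coe_add, ← EReal.coe_sub, ← EReal.coe_add,
            EReal.coe_eq_coe_iff, hinner]; ring
      _ ≤ fconj F₀ p₀ + fconj F₁ p₁ := add_le_add h0' h1'
  refine ⟨p₀, p₁, hsum, ?_⟩
  rw [hα, rhoConj_eq_fconj ρ₀ f₀ p₀, rhoConj_eq_fconj ρ₁ f₁ p₁]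
  exact le_antisymm hge hle
end
end

section
/- Let X be a Hilbert space, y ∈ X, α > 0, and ε ≥ 0. For the quadratic function f₀(x) = (1/(2α))‖x - y‖², the convex ε-subdifferential at any x ∈ X is exactly ∂ᵋ₀ f₀(x) = { (x - y)/α + e/α : e ∈ X, ‖e‖²/(2α) ≤ ε }. -/
open scoped InnerProductSpace
open Set

noncomputable section

variable {X : Type*} [NormedAddCommGroup X] [InnerProductSpace ℝ X] [CompleteSpace X]
theorem epsSubdiff_quadratic (y : X) (α ε : ℝ) (hα : 0 < α) (hε : 0 ≤ ε) (x : X) :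
    proxSubdiff 0 ε (fun z => ((1 / (2 * α) * ‖z - y‖ ^ 2 : ℝ) : EReal)) x =
      {v : X | ∃ e : X, ‖e‖ ^ 2 / (2 * α) ≤ ε ∧ v = α⁻¹ • (x - y) + α⁻¹ • e} := by
  ext v
  simp only [proxSubdiff, mem_setOf_eq]
  have hα' : α ≠ 0 := hα.ne'
  constructor
  · intro h
    set e := α • v - (x - y) with he
    refine ⟨e, ?_, ?_⟩
    · have hz := h (x + e)
      have h1 : x + e - y = α • v := by rw [he]; abel
      have h2 : x + e - x = e := by abel
      rw [h1, h2, ← EReal.coe_add, EReal.coe_le_coe_iff] at hz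
      have h3 : ⟪v, e⟫_ℝ = α * ‖v‖ ^ 2 - ⟪v, x - y⟫_ℝ := by
        rw [he, inner_sub_right, real_inner_smul_right, real_inner_self_eq_norm_sq]
      have h4 : ‖α • v‖ ^ 2 = α ^ 2 * ‖v‖ ^ 2 := by
        rw [norm_smul, mul_pow]; simp [sq_abs]
      have h5 : ‖e‖ ^ 2 = α ^ 2 * ‖v‖ ^ 2 - 2 * α * ⟪v, x - y⟫_ℝ + ‖x - y‖ ^ 2 := by
        rw [he, norm_sub_sq_real, norm_smul, mul_pow, real_inner_smul_left]
        simp [sq_abs]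
        ring
      rw [h3, h4, zero_mul, sub_zero] at hz
      rw [h5, div_le_iff₀ (by positivity)]
      have h2α : (0:ℝ) < 2 * α := by positivity
      field_simp at hz
      nlinarith [hz, h2α, mul_pos h2α h2α]
    · rw [he]
      match_scalars <;> field_simp <;> ring
  · rintro ⟨e, he, rfl⟩ z
    rw [← EReal.coe_add, EReal.coe_le_coe_iff]
    have h1 : ‖z - y‖ ^ 2 = ‖z - x‖ ^ 2 + 2 * ⟪z - x, x - y⟫_ℝ + ‖x - y‖ ^ 2 := by
      have hzy : z - y = (z - x) + (x - y) := by abel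
      rw [hzy, norm_add_sq_real]
    have h2 : ⟪α⁻¹ • (x - y) + α⁻¹ • e, z - x⟫_ℝ
        = α⁻¹ * ⟪z - x, x - y⟫_ℝ + α⁻¹ * ⟪z - x, e⟫_ℝ := by
      rw [inner_add_left, real_inner_smul_left, real_inner_smul_left,
        real_inner_comm (x - y), real_inner_comm e]
    have h3 : 0 ≤ ‖z - x‖ ^ 2 - 2 * ⟪z - x, e⟫_ℝ + ‖e‖ ^ 2 := by
      rw [← norm_sub_sq_real]; positivity
    have he' : ‖e‖ ^ 2 ≤ 2 * α * ε := by
      rw [div_le_iff₀ (by positivity)] at he; linarith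
    rw [h1, h2, zero_mul, sub_zero]
    have hrw : 1 / (2 * α) * (‖z - x‖ ^ 2 + 2 * ⟪z - x, x - y⟫_ℝ + ‖x - y‖ ^ 2)
        = 1 / (2 * α) * ‖z - x‖ ^ 2 + α⁻¹ * ⟪z - x, x - y⟫_ℝ + 1 / (2 * α) * ‖x - y‖ ^ 2 := by
      field_simp
    rw [hrw]
    have key : α⁻¹ * ⟪z - x, e⟫_ℝ - ε ≤ 1 / (2 * α) * ‖z - x‖ ^ 2 := by
      have hmul := mul_le_mul_of_nonneg_left h3
        (le_of_lt (by positivity : (0:ℝ) < 1 / (2 * α)))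
      have hstep : 1 / (2 * α) * ‖e‖ ^ 2 ≤ ε := by
        rw [div_mul_eq_mul_div, one_mul, div_le_iff₀ (by positivity)]; linarith
      have hrw2 : 1 / (2 * α) * (2 * ⟪z - x, e⟫_ℝ) = α⁻¹ * ⟪z - x, e⟫_ℝ := by
        field_simp
      nlinarith [hmul]
    linarith
end
end

section
/- Let X be a Hilbert space, f : X → (-∞,+∞] proper and ρ-weakly convex, ε ≥ 0, α > 0, y, x_ε ∈ X. Suppose there exist ε₀, ε₁ ≥ 0 with ε₀ + ε₁ ≤ ε and e ∈ X with ‖e‖²/(2α) ≤ ε₀ such that (y - x_ε - e)/α ∈ ∂^{ε₁}_{(2,ρ/2)} f(x_ε). Then (y - x_ε)/α ∈ ∂ᵋ_{(2, ρ/2 + 1/(2α))} f(x_ε). -/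
open scoped InnerProductSpace
open Set

noncomputable section

variable {X : Type*} [NormedAddCommGroup X] [InnerProductSpace ℝ X] [CompleteSpace X]
theorem type1_imp_type2 (f : X → EReal) (ρ ε α : ℝ) (hρ : 0 ≤ ρ) (hε : 0 ≤ ε) (hα : 0 < α)
    (hp : EProper f) (hwc : WeaklyConvex ρ f) (y xε : X)
    (h : ∃ ε₀ ε₁ : ℝ, 0 ≤ ε₀ ∧ 0 ≤ ε₁ ∧ ε₀ + ε₁ ≤ ε ∧
      ∃ e : X, ‖e‖ ^ 2 / (2 * α) ≤ ε₀ ∧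
        α⁻¹ • (y - xε - e) ∈ proxSubdiff (ρ / 2) ε₁ f xε) :
    α⁻¹ • (y - xε) ∈ proxSubdiff (ρ / 2 + 1 / (2 * α)) ε f xε := by
  obtain ⟨ε₀, ε₁, hε₀, hε₁, hsum, e, he, hv⟩ := h
  intro x
  refine le_trans ?_ (hv x)
  apply add_le_add_right
  have hcoe : ∀ a b : ℝ, a ≤ b → (a : EReal) ≤ (b : EReal) := fun a b h => by
    exact_mod_cast h
  apply hcoe
  -- real inequality
  have key : ⟪α⁻¹ • (y - xε), x - xε⟫_ℝ - ⟪α⁻¹ • (y - xε - e), x - xε⟫_ℝ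
      ≤ ε₀ + 1 / (2 * α) * ‖x - xε‖ ^ 2 := by
    have h1 : ⟪α⁻¹ • (y - xε), x - xε⟫_ℝ - ⟪α⁻¹ • (y - xε - e), x - xε⟫_ℝ
        = α⁻¹ * ⟪e, x - xε⟫_ℝ := by
      rw [real_inner_smul_left, real_inner_smul_left, ← mul_sub,
        ← inner_sub_left, show y - xε - (y - xε - e) = e from by abel]
    rw [h1]
    have h2 : ⟪e, x - xε⟫_ℝ ≤ ‖e‖ * ‖x - xε‖ := real_inner_le_norm _ _
    have h3 : ‖e‖ * ‖x - xε‖ ≤ ‖e‖ ^ 2 / 2 + ‖x - xε‖ ^ 2 / 2 := by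
      nlinarith [sq_nonneg (‖e‖ - ‖x - xε‖)]
    have h4 : α⁻¹ * ⟪e, x - xε⟫_ℝ ≤ α⁻¹ * (‖e‖ ^ 2 / 2 + ‖x - xε‖ ^ 2 / 2) := by
      apply mul_le_mul_of_nonneg_left (h2.trans h3) (by positivity)
    refine h4.trans ?_
    have h5 : α⁻¹ * (‖e‖ ^ 2 / 2) = ‖e‖ ^ 2 / (2 * α) := by
      ring
    have h6 : α⁻¹ * (‖x - xε‖ ^ 2 / 2) = 1 / (2 * α) * ‖x - xε‖ ^ 2 := by
      ring
    rw [mul_add, h5, h6]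
    linarith
  nlinarith [key]
end
end
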